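/- (Kelly's Lemma) Let G₁ and G₂ be finite simple graphs, each on n vertices, with the same deck. Then for every finite simple graph H with |V(H)| < n, ν(H, G₁) = ν(H, G₂). -/

import Mathlib

/-- `subgraphCount H G` is `ν(H, G)`: the number of vertex subsets `S` of `G` with
`|S| = |V(H)|` such that the induced subgraph `G[S]` is isomorphic to `H`. -/
noncomputable def subgraphCount {α β : Type*} (H : SimpleGraph α) (G : SimpleGraph β) : ℕ :=
  Nat.card {s : Finset β // s.card = Nat.card α ∧ Nonempty (G.induce (↑s : Set β) ≃g H)}

/-- Two graphs have the same deck if there is a bijection `σ` between their vertex sets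
such that `G₁ - v` is isomorphic to `G₂ - σ(v)` for every vertex `v`. -/
def SameDeck {V₁ V₂ : Type*} (G₁ : SimpleGraph V₁) (G₂ : SimpleGraph V₂) : Prop :=
  ∃ σ : V₁ ≃ V₂, ∀ v : V₁,
    Nonempty (G₁.induce ({v}ᶜ : Set V₁) ≃g G₂.induce ({σ v}ᶜ : Set V₂))

open Finset

section Aux

variable {V V' U : Type*}

/-- Transport an induced subgraph along an iso of host graphs. -/
noncomputable def mapInduceIso {G : SimpleGraph V} {G' : SimpleGraph V'} (φ : G ≃g G')
    (s : Set V) : G.induce s ≃g G'.induce (⇑φ '' s) where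
  toEquiv := Equiv.Set.image ⇑φ s φ.toEquiv.injective
  map_rel_iff' := by
    intro a b
    exact φ.map_adj_iff

/-- Equal sets give isomorphic induced subgraphs. -/
def induceCongr (G : SimpleGraph V) {A B : Set V} (h : A = B) :
    G.induce A ≃g G.induce B := by subst h; exact SimpleGraph.Iso.refl

/-- Double induce is an induce of the image. -/
noncomputable def doubleInduceIso (G : SimpleGraph V) (A : Set V) (s : Set A) :
    (G.induce A).induce s ≃g G.induce (Subtype.val '' s) where
  toEquiv := Equiv.Set.image Subtype.val s Subtype.val_injective
  map_rel_iff' := by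
    intro a b
    simp [Equiv.Set.image, Equiv.Set.imageOfInjOn]

open Classical in
lemma subgraphCount_eq_filter [Fintype V] (H : SimpleGraph U) (G : SimpleGraph V) :
    subgraphCount H G = (univ.filter
      (fun s : Finset V => s.card = Nat.card U ∧ Nonempty (G.induce (↑s : Set V) ≃g H))).card := by
  rw [subgraphCount, Nat.card_eq_fintype_card, Fintype.card_subtype]

/-- Invariance of `subgraphCount` under isomorphism of the host graph. -/
lemma subgraphCount_congr [Fintype V] [Fintype V'] {G : SimpleGraph V} {G' : SimpleGraph V'}
    (φ : G ≃g G') (H : SimpleGraph U) : subgraphCount H G = subgraphCount H G' := by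
  unfold subgraphCount
  refine Nat.card_congr ?_
  refine
    { toFun := fun s => ⟨s.1.map φ.toEquiv.toEmbedding, ?_, ?_⟩
      invFun := fun s => ⟨s.1.map φ.toEquiv.symm.toEmbedding, ?_, ?_⟩
      left_inv := ?_
      right_inv := ?_ }
  · rw [Finset.card_map]; exact s.2.1
  · obtain ⟨ψ⟩ := s.2.2
    have h : (↑(s.1.map φ.toEquiv.toEmbedding) : Set V') = ⇑φ '' (↑s.1 : Set V) := by
      rw [Finset.coe_map]; rfl
    exact ⟨((induceCongr G' h).trans (mapInduceIso φ (↑s.1 : Set V)).symm).trans ψ⟩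
  · rw [Finset.card_map]; exact s.2.1
  · obtain ⟨ψ⟩ := s.2.2
    have h : (↑(s.1.map φ.toEquiv.symm.toEmbedding) : Set V) = ⇑φ.symm '' (↑s.1 : Set V') := by
      rw [Finset.coe_map]; rfl
    exact ⟨((induceCongr G h).trans (mapInduceIso φ.symm (↑s.1 : Set V')).symm).trans ψ⟩
  · intro s
    apply Subtype.ext
    simp only [Finset.map_map]
    ext x
    simp
    exact ⟨fun ⟨a, ha, h⟩ => (show a = x from (φ.toEquiv.symm_apply_apply a).symm.trans h) ▸ ha,
      fun hx => ⟨x, hx, φ.toEquiv.symm_apply_apply x⟩⟩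
  · intro s
    apply Subtype.ext
    simp only [Finset.map_map]
    ext x
    simp
    exact ⟨fun ⟨a, ha, h⟩ => (show a = x from (φ.toEquiv.apply_symm_apply a).symm.trans h) ▸ ha,
      fun hx => ⟨x, hx, φ.toEquiv.apply_symm_apply x⟩⟩

open Classical in
/-- Kelly's counting identity: summing `ν(H, G - v)` over all vertices `v`. -/
lemma sum_subgraphCount_induce_compl [Fintype V] [Fintype U]
    (G : SimpleGraph V) (H : SimpleGraph U) :
    ∑ v : V, subgraphCount H (G.induce ({v}ᶜ : Set V)) =
      (Fintype.card V - Nat.card U) * subgraphCount H G := by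
  set Q : Finset V → Prop :=
    fun s => s.card = Nat.card U ∧ Nonempty (G.induce (↑s : Set V) ≃g H) with hQ
  -- Step 1: for each v, the count for `G - v` is a count of finsets of `V` avoiding `v`.
  have step1 : ∀ v : V, subgraphCount H (G.induce ({v}ᶜ : Set V)) =
      (univ.filter (fun s : Finset V => v ∉ s ∧ Q s)).card := by
    intro v
    rw [subgraphCount_eq_filter]
    apply Finset.card_bij (fun s _ => s.map (Function.Embedding.subtype _))
    · intro s hs
      simp only [mem_filter, mem_univ, true_and] at hs ⊢
      refine ⟨?_, ?_, ?_⟩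
      · simp [Finset.mem_map]
      · rw [Finset.card_map]; exact hs.1
      · obtain ⟨ψ⟩ := hs.2
        have h : (↑(s.map (Function.Embedding.subtype _)) : Set V) =
            Subtype.val '' (↑s : Set ({v}ᶜ : Set V)) := by
          rw [Finset.coe_map]; rfl
        exact ⟨((induceCongr G h).trans
          (doubleInduceIso G ({v}ᶜ : Set V) (↑s : Set ({v}ᶜ : Set V))).symm).trans ψ⟩
    · intro s₁ _ s₂ _ h
      exact Finset.map_injective _ h
    · intro s hs
      simp only [mem_filter, mem_univ, true_and] at hs
      obtain ⟨hv, hcard, hiso⟩ := hs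
      have hmap : (s.subtype (fun x => x ∈ ({v}ᶜ : Set V))).map
          (Function.Embedding.subtype _) = s := by
        rw [Finset.subtype_map]
        exact Finset.filter_true_of_mem (fun x hx => by
          simp only [Set.mem_compl_iff, Set.mem_singleton_iff]
          rintro rfl; exact hv hx)
      refine ⟨s.subtype (fun x => x ∈ ({v}ᶜ : Set V)), ?_, hmap⟩
      simp only [mem_filter, mem_univ, true_and]
      constructor
      · rw [← Finset.card_map (Function.Embedding.subtype _), hmap]; exact hcard
      · obtain ⟨ψ⟩ := hiso
        have h : Subtype.val '' (↑(s.subtype (fun x => x ∈ ({v}ᶜ : Set V))) :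
            Set ({v}ᶜ : Set V)) = (↑s : Set V) := by
          ext x
          constructor
          · rintro ⟨a, ha, rfl⟩
            simpa using (Finset.mem_subtype.mp ha)
          · intro hx
            have hxv : x ∈ ({v}ᶜ : Set V) := by
              simp only [Set.mem_compl_iff, Set.mem_singleton_iff]
              rintro rfl; exact hv hx
            exact ⟨⟨x, hxv⟩, Finset.mem_subtype.mpr hx, rfl⟩
        exact ⟨((doubleInduceIso G ({v}ᶜ : Set V) _).trans (induceCongr G h)).trans ψ⟩
  -- Step 2: double counting.
  calc ∑ v : V, subgraphCount H (G.induce ({v}ᶜ : Set V))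
      = ∑ v : V, (univ.filter (fun s : Finset V => v ∉ s ∧ Q s)).card :=
        Finset.sum_congr rfl fun v _ => step1 v
    _ = ∑ v : V, ∑ s : Finset V, if v ∉ s ∧ Q s then 1 else 0 :=
        Finset.sum_congr rfl fun v _ => Finset.card_filter _ _
    _ = ∑ s : Finset V, ∑ v : V, if v ∉ s ∧ Q s then 1 else 0 := Finset.sum_comm
    _ = ∑ s ∈ univ.filter Q, (Fintype.card V - Nat.card U) := by
        rw [Finset.sum_filter]
        refine Finset.sum_congr rfl fun s _ => ?_
        by_cases hQs : Q s
        · rw [if_pos hQs]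
          calc ∑ v : V, (if v ∉ s ∧ Q s then (1:ℕ) else 0)
              = ∑ v : V, (if v ∉ s then (1:ℕ) else 0) :=
                Finset.sum_congr rfl fun v _ => by
                  by_cases hv : v ∈ s
                  · simp [hv]
                  · simp only [hv, not_false_iff, true_and, if_pos, if_congr]
                    rw [if_pos hQs]
            _ = (univ.filter (fun v => v ∉ s)).card := (Finset.card_filter _ _).symm
            _ = sᶜ.card := by congr 1; ext x; simp
            _ = Fintype.card V - s.card := Finset.card_compl s
            _ = Fintype.card V - Nat.card U := by rw [hQs.1]
        · rw [if_neg hQs]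
          exact Finset.sum_eq_zero fun v _ => if_neg (fun hc => hQs hc.2)
    _ = (univ.filter Q).card * (Fintype.card V - Nat.card U) := by
        rw [Finset.sum_const, smul_eq_mul]
    _ = (Fintype.card V - Nat.card U) * subgraphCount H G := by
        rw [subgraphCount_eq_filter H G, Nat.mul_comm]

end Aux

/-- Kelly's Lemma: if `G₁` and `G₂` are graphs on `n` vertices with the same deck, then
`ν(H, G₁) = ν(H, G₂)` for every graph `H` on fewer than `n` vertices. -/
theorem kelly_lemma {V₁ V₂ : Type*} [Fintype V₁] [Fintype V₂]
    (G₁ : SimpleGraph V₁) (G₂ : SimpleGraph V₂) (n : ℕ)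
    (h₁ : Fintype.card V₁ = n) (h₂ : Fintype.card V₂ = n)
    (hdeck : SameDeck G₁ G₂) :
    ∀ (U : Type*) [Fintype U] (H : SimpleGraph U), Fintype.card U < n →
      subgraphCount H G₁ = subgraphCount H G₂ := by
  intro U _ H hU
  classical
  obtain ⟨σ, hσ⟩ := hdeck
  have hsum : ∑ v : V₁, subgraphCount H (G₁.induce ({v}ᶜ : Set V₁)) =
      ∑ w : V₂, subgraphCount H (G₂.induce ({w}ᶜ : Set V₂)) := by
    rw [← Equiv.sum_comp σ (fun w => subgraphCount H (G₂.induce ({w}ᶜ : Set V₂)))]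
    exact Finset.sum_congr rfl fun v _ => subgraphCount_congr (hσ v).some H
  rw [sum_subgraphCount_induce_compl G₁ H, sum_subgraphCount_induce_compl G₂ H,
    h₁, h₂] at hsum
  have hk : Nat.card U < n := by rwa [Nat.card_eq_fintype_card]
  have hpos : 0 < n - Nat.card U := Nat.sub_pos_of_lt hk
  exact Nat.eq_of_mul_eq_mul_left hpos hsum
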